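/- Let A be a diagonal n×n matrix with diagonal entries β₁₁,…,βₙₙ ∈ (0,1) and let C₁, C₂ ⊆ B[0,1] be nonempty compact sets. Then there exist compact sets C₁′, C₂′ ⊆ B[0,1] such that: (i) C₁ ∩ C₂ = C₁′ ∩ C₂′; (ii) τ_A(C₁′) + τ_A(C₂′) ≥ τ_A(C₁) + τ_A(C₂); and (iii) no bounded gap G¹ of C₁′ satisfies closure(G¹) ⊆ G² for any bounded gap G² of C₂′, and no bounded gap G² of C₂′ satisfies closure(G²) ⊆ G¹ for any bounded gap G¹ of C₁′. -/

import Mathlib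

open Metric Set Topology Filter
open scoped ENNReal Classical

noncomputable section

/-- The affine box `A^s(B[0,1]) + z`, where `A` is the diagonal matrix with
diagonal entries `β j`, so `A^s(B[0,1]) + z = {x : |x j - z j| ≤ (β j)^s for all j}`. -/
def affBox {n : ℕ} (β : Fin n → ℝ) (s : ℝ) (z : Fin n → ℝ) : Set (Fin n → ℝ) :=
  {x | ∀ j, |x j - z j| ≤ (β j) ^ s}

/-- The size `S_A(F)` of `F` with respect to the diagonal matrix with entries `β`. -/
def sizeWrt {n : ℕ} (β : Fin n → ℝ) (F : Set (Fin n → ℝ)) : ℝ :=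
  sInf {t | 0 < t ∧ ∃ z, F ⊆ affBox β (1 / t) z}

/-- `G` is a gap (a connected component of the complement) of `C`. -/
def IsGap {n : ℕ} (C G : Set (Fin n → ℝ)) : Prop :=
  ∃ x ∈ Cᶜ, G = connectedComponentIn Cᶜ x

/-- `G` is a bounded gap of `C`. -/
def IsBoundedGap {n : ℕ} (C G : Set (Fin n → ℝ)) : Prop :=
  IsGap C G ∧ Bornology.IsBounded G

/-- The unbounded gap `E` of `C`: the union of the unbounded connected
components of the complement of `C`. -/
def unboundedGap {n : ℕ} (C : Set (Fin n → ℝ)) : Set (Fin n → ℝ) :=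
  {x | x ∈ Cᶜ ∧ ¬ Bornology.IsBounded (connectedComponentIn Cᶜ x)}

/-- An enumeration `(G_k)_{k ∈ J}` of the bounded gaps of `C`, in non-increasing
order of size with respect to `β`. -/
structure GapEnum {n : ℕ} (β : Fin n → ℝ) (C : Set (Fin n → ℝ)) where
  J : Set ℕ
  G : ℕ → Set (Fin n → ℝ)
  downward : ∀ k l : ℕ, k ≤ l → l ∈ J → k ∈ J
  isGap : ∀ k ∈ J, IsBoundedGap C (G k)
  inj : ∀ k ∈ J, ∀ l ∈ J, G k = G l → k = l
  surj : ∀ G', IsBoundedGap C G' → ∃ k ∈ J, G k = G'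
  anti : ∀ k ∈ J, ∀ l ∈ J, k ≤ l → sizeWrt β (G l) ≤ sizeWrt β (G k)

/-- The gap distance `GD_A(m, C)` with respect to the enumeration `e`. -/
def gapDist {n : ℕ} (β : Fin n → ℝ) (C : Set (Fin n → ℝ)) (e : GapEnum β C) (m : ℕ) : ℝ :=
  sInf {t | 0 < t ∧ ∃ z, (affBox β (1 / t) z ∩ e.G m).Nonempty ∧
    (affBox β (1 / t) z ∩ ((⋃ i ∈ e.J ∩ Iio m, e.G i) ∪ unboundedGap C)).Nonempty}

/-- Extended-real-valued inverse, with `0⁻¹ = ∞`. -/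
def invE (s : ℝ) : EReal := if s = 0 then ⊤ else ((s⁻¹ : ℝ) : EReal)

/-- Affine thickness `τ_A(C)` of `C` with respect to the diagonal matrix with entries `β`,
computed from the enumeration `e` of the bounded gaps of `C`. -/
def thicknessA {n : ℕ} (β : Fin n → ℝ) (C : Set (Fin n → ℝ)) (e : GapEnum β C) : EReal :=
  if e.J = ∅ then (if (interior C).Nonempty then ⊤ else ⊥)
  else if ∃ k ∈ e.J, gapDist β C e k = 0 then ⊥
  else ⨅ k ∈ e.J, (invE (sizeWrt β (e.G k)) - invE (gapDist β C e k))

/-- Open sets `U`, `V` are linked. -/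
def Linked {n : ℕ} (U V : Set (Fin n → ℝ)) : Prop :=
  (U ∩ V).Nonempty ∧ (frontier U \ V).Nonempty ∧ (frontier V \ U).Nonempty

/-- Compact sets `C₁`, `C₂` are BG linked. -/
def BGLinked {n : ℕ} (C₁ C₂ : Set (Fin n → ℝ)) : Prop :=
  ∀ G₁ G₂, IsBoundedGap C₁ G₁ → IsBoundedGap C₂ G₂ → Linked G₁ G₂ ∨ G₁ ∩ G₂ = ∅

/-- `C₁, C₂ ⊆ B[0,1]` are a strongly refinable pair for the diagonal matrix with entries `β`. -/
def StronglyRefinable {n : ℕ} (β : Fin n → ℝ) (C₁ C₂ : Set (Fin n → ℝ)) : Prop :=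
  ∃ C₁' C₂' : Set (Fin n → ℝ), IsCompact C₁' ∧ IsCompact C₂' ∧
    C₁' ⊆ closedBall 0 1 ∧ C₂' ⊆ closedBall 0 1 ∧
    BGLinked C₁' C₂' ∧
    (∃ G₁, IsBoundedGap C₁' G₁ ∧ ¬ frontier G₁ ⊆ unboundedGap C₂') ∧
    (∃ G₂, IsBoundedGap C₂' G₂ ∧ ¬ frontier G₂ ⊆ unboundedGap C₁') ∧
    (∀ e₁ : GapEnum β C₁, ∀ e₂ : GapEnum β C₂, ∃ e₁' : GapEnum β C₁', ∃ e₂' : GapEnum β C₂',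
      thicknessA β C₁ e₁ + thicknessA β C₂ e₂ ≤ thicknessA β C₁' e₁' + thicknessA β C₂' e₂') ∧
    C₁' ∩ C₂' ⊆ C₁ ∩ C₂

/-- The distance between two sets. -/
def setDist {n : ℕ} (A B : Set (Fin n → ℝ)) : ℝ :=
  sInf {r | ∃ a ∈ A, ∃ b ∈ B, r = dist a b}

/-- An enumeration of the bounded gaps of `C` in non-increasing order of diameter. -/
structure DiamEnum {n : ℕ} (C : Set (Fin n → ℝ)) where
  J : Set ℕ
  G : ℕ → Set (Fin n → ℝ)
  downward : ∀ k l : ℕ, k ≤ l → l ∈ J → k ∈ J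
  isGap : ∀ k ∈ J, IsBoundedGap C (G k)
  inj : ∀ k ∈ J, ∀ l ∈ J, G k = G l → k = l
  surj : ∀ G', IsBoundedGap C G' → ∃ k ∈ J, G k = G'
  anti : ∀ k ∈ J, ∀ l ∈ J, k ≤ l → Metric.diam (G l) ≤ Metric.diam (G k)

/-- The Falconer–Yavicoli thickness `τ(C)`, computed from the enumeration `e` of
the bounded gaps of `C` in non-increasing order of diameter. -/
def FYthickness {n : ℕ} (C : Set (Fin n → ℝ)) (e : DiamEnum C) : ℝ≥0∞ :=
  if e.J = ∅ then (if (interior C).Nonempty then ⊤ else 0)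
  else ⨅ k ∈ e.J, ENNReal.ofReal
    (setDist (e.G k) (unboundedGap C ∪ ⋃ j ∈ e.J ∩ Iio k, e.G j) / Metric.diam (e.G k))

end

noncomputable section
namespace RemoveGapsAux

variable {n : ℕ}

lemma gap_subset_compl {C G : Set (Fin n → ℝ)} (h : IsGap C G) : G ⊆ Cᶜ := by
  obtain ⟨x, hx, rfl⟩ := h; exact connectedComponentIn_subset _ _

lemma gap_nonempty {C G : Set (Fin n → ℝ)} (h : IsGap C G) : G.Nonempty := by
  obtain ⟨x, hx, rfl⟩ := h; exact ⟨x, mem_connectedComponentIn hx⟩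

lemma gap_isOpen {C G : Set (Fin n → ℝ)} (hC : IsCompact C) (h : IsGap C G) : IsOpen G := by
  obtain ⟨x, hx, rfl⟩ := h
  exact hC.isClosed.isOpen_compl.connectedComponentIn

lemma gap_isPreconnected {C G : Set (Fin n → ℝ)} (h : IsGap C G) : IsPreconnected G := by
  obtain ⟨x, hx, rfl⟩ := h; exact isPreconnected_connectedComponentIn

/-- points of the closure of a gap that lie in `Cᶜ` are in the gap -/
lemma mem_gap_of_mem_closure {C G : Set (Fin n → ℝ)} (hC : IsCompact C) (hG : IsGap C G)
    {y : Fin n → ℝ} (hy : y ∈ Cᶜ) (hyc : y ∈ closure G) : y ∈ G := by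
  obtain ⟨x, hx, rfl⟩ := hG
  have hopen : IsOpen Cᶜ := hC.isClosed.isOpen_compl
  have h1 : connectedComponentIn Cᶜ y ∈ 𝓝 y :=
    (hopen.connectedComponentIn).mem_nhds (mem_connectedComponentIn hy)
  obtain ⟨w, hw1, hw2⟩ := mem_closure_iff_nhds.mp hyc _ h1
  have e1 := connectedComponentIn_eq hw1
  have e2 := connectedComponentIn_eq hw2
  rw [e2, ← e1]
  exact mem_connectedComponentIn hy

lemma unbounded_component_outside {C : Set (Fin n → ℝ)} (hsub : C ⊆ closedBall 0 1)
    {x : Fin n → ℝ} (hx : x ∉ closedBall 0 1) : x ∈ unboundedGap C := by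
  have hx1 : 1 < ‖x‖ := by
    by_contra h
    exact hx (mem_closedBall_zero_iff.mpr (not_lt.mp h))
  have hxC : x ∈ Cᶜ := fun h => hx (hsub h)
  refine ⟨hxC, fun hb => ?_⟩
  set R : Set (Fin n → ℝ) := (fun a : ℝ => a • x) '' Ici 1 with hR
  have hRconn : IsPreconnected R :=
    isPreconnected_Ici.image _ (continuous_id.smul continuous_const).continuousOn
  have hRsub : R ⊆ Cᶜ := by
    rintro y ⟨a, ha, rfl⟩
    intro hyC
    have : ‖a • x‖ ≤ 1 := mem_closedBall_zero_iff.mp (hsub hyC)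
    rw [norm_smul, Real.norm_eq_abs, abs_of_nonneg (by linarith [mem_Ici.mp ha])] at this
    nlinarith [mem_Ici.mp ha]
  have hxR : x ∈ R := ⟨1, Set.mem_Ici.mpr le_rfl, one_smul _ _⟩
  have hRcomp : R ⊆ connectedComponentIn Cᶜ x := hRconn.subset_connectedComponentIn hxR hRsub
  obtain ⟨M, hM⟩ := hb.exists_norm_le
  have hle : ∀ a : ℝ, 1 ≤ a → a * ‖x‖ ≤ M := by
    intro a ha
    have := hM _ (hRcomp ⟨a, ha, rfl⟩)
    rwa [norm_smul, Real.norm_eq_abs, abs_of_nonneg (by linarith)] at this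
  have h1 := hle 1 le_rfl
  have h2 := hle ((M + 1) / ‖x‖) (by rw [le_div_iff₀ (by linarith)]; linarith)
  rw [div_mul_cancel₀] at h2 <;> nlinarith

lemma boundedGap_subset_ball {C G : Set (Fin n → ℝ)} (hsub : C ⊆ closedBall 0 1)
    (h : IsBoundedGap C G) : G ⊆ closedBall 0 1 := by
  intro y hy
  by_contra hyb
  obtain ⟨x, hx, rfl⟩ := h.1
  have h2 := (unbounded_component_outside hsub hyb).2
  rw [← connectedComponentIn_eq hy] at h2
  exact h2 h.2

/-- the filled set: `C` together with the closures of all bounded gaps whose closure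
misses `K`. -/
def fill (C K : Set (Fin n → ℝ)) : Set (Fin n → ℝ) :=
  C ∪ ⋃ G ∈ {G | IsBoundedGap C G ∧ closure G ∩ K = ∅}, closure G

lemma subset_fill {C K : Set (Fin n → ℝ)} : C ⊆ fill C K := subset_union_left

lemma fill_subset_ball {C K : Set (Fin n → ℝ)} (hsub : C ⊆ closedBall 0 1) :
    fill C K ⊆ closedBall 0 1 := by
  refine union_subset hsub ?_
  refine iUnion₂_subset fun G hG => ?_
  exact closure_minimal (boundedGap_subset_ball hsub hG.1) Metric.isClosed_closedBall

lemma isClosed_fill {C K : Set (Fin n → ℝ)} (hC : IsCompact C) : IsClosed (fill C K) := by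
  refine isClosed_of_closure_subset ?_
  intro y hy
  by_cases hyC : y ∈ C
  · exact Or.inl hyC
  have hyc : y ∈ Cᶜ := hyC
  have hopen : IsOpen Cᶜ := hC.isClosed.isOpen_compl
  have hnb : connectedComponentIn Cᶜ y ∈ 𝓝 y :=
    (hopen.connectedComponentIn).mem_nhds (mem_connectedComponentIn hyc)
  obtain ⟨w, hw1, hw2⟩ := mem_closure_iff_nhds.mp hy _ hnb
  rcases hw2 with hwC | hwU
  · exact absurd hwC (connectedComponentIn_subset _ _ hw1)
  · simp only [mem_iUnion, exists_prop] at hwU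
    obtain ⟨G, hGsel, hwG⟩ := hwU
    have hwCc : w ∈ Cᶜ := connectedComponentIn_subset _ _ hw1
    have hwG' : w ∈ G := mem_gap_of_mem_closure hC hGsel.1.1 hwCc hwG
    obtain ⟨x, hx, hGeq⟩ := hGsel.1.1
    subst hGeq
    have e1 := connectedComponentIn_eq hwG'
    have e2 := connectedComponentIn_eq hw1
    rw [← e2] at e1
    right
    simp only [mem_iUnion, exists_prop]
    exact ⟨_, hGsel, subset_closure (e1.symm ▸ mem_connectedComponentIn hyc)⟩

lemma isCompact_fill {C K : Set (Fin n → ℝ)} (hC : IsCompact C) (hsub : C ⊆ closedBall 0 1) :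
    IsCompact (fill C K) :=
  (isCompact_closedBall 0 1).of_isClosed_subset (isClosed_fill hC) (fill_subset_ball hsub)

lemma compl_fill_subset {C K : Set (Fin n → ℝ)} : (fill C K)ᶜ ⊆ Cᶜ :=
  compl_subset_compl.mpr subset_fill

lemma fill_compl_component {C K : Set (Fin n → ℝ)} (hC : IsCompact C)
    {y : Fin n → ℝ} (hy : y ∈ (fill C K)ᶜ) :
    connectedComponentIn (fill C K)ᶜ y = connectedComponentIn Cᶜ y := by
  have hyC : y ∈ Cᶜ := compl_fill_subset hy
  refine subset_antisymm (connectedComponentIn_mono _ compl_fill_subset) ?_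
  have hW : connectedComponentIn Cᶜ y ⊆ (fill C K)ᶜ := by
    intro w hw
    have hwCc : w ∈ Cᶜ := connectedComponentIn_subset _ _ hw
    intro hwF
    rcases hwF with hwC | hwU
    · exact hwCc hwC
    · simp only [mem_iUnion, exists_prop] at hwU
      obtain ⟨G, hGsel, hwG⟩ := hwU
      have hwG' : w ∈ G := mem_gap_of_mem_closure hC hGsel.1.1 hwCc hwG
      obtain ⟨x, hx, hGeq⟩ := hGsel.1.1
      subst hGeq
      have e1 := connectedComponentIn_eq hwG'
      have e2 := connectedComponentIn_eq hw
      apply hy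
      right
      simp only [mem_iUnion, exists_prop]
      refine ⟨_, hGsel, subset_closure ?_⟩
      rw [e1, ← e2]
      exact mem_connectedComponentIn hyC
  exact isPreconnected_connectedComponentIn.subset_connectedComponentIn
    (mem_connectedComponentIn hyC) hW

lemma isBoundedGap_fill_iff {C K : Set (Fin n → ℝ)} (hC : IsCompact C)
    {H : Set (Fin n → ℝ)} :
    IsBoundedGap (fill C K) H ↔ IsBoundedGap C H ∧ (closure H ∩ K).Nonempty := by
  constructor
  · rintro ⟨⟨y, hy, rfl⟩, hb⟩
    have e := fill_compl_component hC hy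
    rw [e] at hb ⊢
    have hyC : y ∈ Cᶜ := compl_fill_subset hy
    refine ⟨⟨⟨y, hyC, rfl⟩, hb⟩, ?_⟩
    by_contra hempty
    rw [not_nonempty_iff_eq_empty] at hempty
    apply hy
    right
    simp only [mem_iUnion, exists_prop]
    exact ⟨_, ⟨⟨⟨y, hyC, rfl⟩, hb⟩, hempty⟩, subset_closure (mem_connectedComponentIn hyC)⟩
  · rintro ⟨⟨⟨x, hx, rfl⟩, hb⟩, hne⟩
    have hxF : x ∈ (fill C K)ᶜ := by
      intro hxF
      rcases hxF with hxC | hxU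
      · exact hx hxC
      · simp only [mem_iUnion, exists_prop] at hxU
        obtain ⟨G, hGsel, hxG⟩ := hxU
        have hxG' : x ∈ G := mem_gap_of_mem_closure hC hGsel.1.1 hx hxG
        obtain ⟨a, ha, hGeq⟩ := hGsel.1.1
        subst hGeq
        have e1 := connectedComponentIn_eq hxG'
        rw [e1] at hGsel
        rw [hGsel.2] at hne
        exact hne.ne_empty rfl
    exact ⟨⟨x, hxF, (fill_compl_component hC hxF).symm⟩, hb⟩

lemma unboundedGap_fill {C K : Set (Fin n → ℝ)} (hC : IsCompact C) :
    unboundedGap (fill C K) = unboundedGap C := by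
  ext y
  constructor
  · rintro ⟨hy, hb⟩
    exact ⟨compl_fill_subset hy, by rw [← fill_compl_component hC hy]; exact hb⟩
  · rintro ⟨hy, hb⟩
    have hyF : y ∈ (fill C K)ᶜ := by
      intro hyF
      rcases hyF with hyC | hyU
      · exact hy hyC
      · simp only [mem_iUnion, exists_prop] at hyU
        obtain ⟨G, hGsel, hyG⟩ := hyU
        have hyG' : y ∈ G := mem_gap_of_mem_closure hC hGsel.1.1 hy hyG
        obtain ⟨a, ha, hGeq⟩ := hGsel.1.1
        subst hGeq
        have e1 := connectedComponentIn_eq hyG'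
        rw [e1] at hGsel
        exact hb hGsel.1.2
    exact ⟨hyF, by rw [fill_compl_component hC hyF]; exact hb⟩

lemma fill_inter {C₁ C₂ : Set (Fin n → ℝ)} (hC₁ : IsCompact C₁) (hC₂ : IsCompact C₂)
    (hne₁ : C₁.Nonempty) :
    fill C₁ C₂ ∩ fill C₂ C₁ = C₁ ∩ C₂ := by
  apply subset_antisymm _ (inter_subset_inter subset_fill subset_fill)
  rintro x ⟨hx1, hx2⟩
  have hmem : ∀ {C K : Set (Fin n → ℝ)}, x ∈ fill C K → x ∉ C →
      ∃ G, (IsBoundedGap C G ∧ closure G ∩ K = ∅) ∧ x ∈ closure G := by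
    intro C K hx hxC
    rcases hx with h | h
    · exact absurd h hxC
    · simpa only [mem_iUnion, exists_prop, mem_setOf_eq] using h
  have hdisj : ∀ {C K : Set (Fin n → ℝ)} {G : Set (Fin n → ℝ)},
      closure G ∩ K = ∅ → x ∈ closure G → x ∉ K := by
    intro C K G hGK hxG hxK
    exact absurd hGK (Set.Nonempty.ne_empty ⟨x, hxG, hxK⟩)
  by_cases hxC1 : x ∈ C₁
  · by_cases hxC2 : x ∈ C₂
    · exact ⟨hxC1, hxC2⟩
    · obtain ⟨G, hGsel, hxG⟩ := hmem hx2 hxC2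
      exact absurd hxC1 (hdisj (C := C₂) hGsel.2 hxG)
  · by_cases hxC2 : x ∈ C₂
    · obtain ⟨G, hGsel, hxG⟩ := hmem hx1 hxC1
      exact absurd hxC2 (hdisj (C := C₁) hGsel.2 hxG)
    · exfalso
      obtain ⟨G, hGsel, hxG⟩ := hmem hx1 hxC1
      obtain ⟨G', hGsel', hxG'⟩ := hmem hx2 hxC2
      have hxG2 : x ∈ G := mem_gap_of_mem_closure hC₁ hGsel.1.1 hxC1 hxG
      have hxG2' : x ∈ G' := mem_gap_of_mem_closure hC₂ hGsel'.1.1 hxC2 hxG'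
      -- G' ⊆ C₁ᶜ and G ⊆ C₂ᶜ
      have hG'sub : G' ⊆ C₁ᶜ := fun w hw hwC =>
        absurd hGsel'.2 (Set.Nonempty.ne_empty ⟨w, subset_closure hw, hwC⟩)
      have hGsub : G ⊆ C₂ᶜ := fun w hw hwC =>
        absurd hGsel.2 (Set.Nonempty.ne_empty ⟨w, subset_closure hw, hwC⟩)
      -- G' ⊆ G
      obtain ⟨a, ha, hGeq⟩ := hGsel.1.1
      have eG : connectedComponentIn C₁ᶜ x = G := by
        rw [hGeq]; exact (connectedComponentIn_eq (hGeq ▸ hxG2)).symm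
      have hG'G : G' ⊆ G := by
        rw [← eG]
        exact (gap_isPreconnected hGsel'.1.1).subset_connectedComponentIn hxG2' hG'sub
      obtain ⟨a', ha', hGeq'⟩ := hGsel'.1.1
      have eG' : connectedComponentIn C₂ᶜ x = G' := by
        rw [hGeq']; exact (connectedComponentIn_eq (hGeq' ▸ hxG2')).symm
      have hGG' : G ⊆ G' := by
        rw [← eG']
        exact (gap_isPreconnected hGsel.1.1).subset_connectedComponentIn hxG2 hGsub
      have hGGeq : G = G' := subset_antisymm hGG' hG'G
      -- G is clopen and nonempty, hence univ
      have hGopen : IsOpen G := gap_isOpen hC₁ hGsel.1.1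
      have hGclosed : IsClosed G := by
        rw [← closure_subset_iff_isClosed]
        intro y hy
        have hyC1 : y ∈ C₁ᶜ := by
          intro hyC
          refine absurd hGsel'.2 (Set.Nonempty.ne_empty ⟨y, ?_, hyC⟩)
          rw [← hGGeq]; exact hy
        exact mem_gap_of_mem_closure hC₁ hGsel.1.1 hyC1 hy
      have : G = univ := (IsClopen.eq_univ ⟨hGclosed, hGopen⟩ ⟨x, hxG2⟩)
      obtain ⟨c, hc⟩ := hne₁
      have : c ∈ G := this ▸ mem_univ c
      exact (gap_subset_compl hGsel.1.1 this) hc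


lemma invE_anti {a b : ℝ} (ha : 0 ≤ a) (h : a ≤ b) : invE b ≤ invE a := by
  rcases ha.eq_or_lt with rfl | ha'
  · simp only [invE, if_pos rfl]; exact le_top
  · rw [invE, invE, if_neg ha'.ne', if_neg (ha'.trans_le h).ne']
    exact EReal.coe_le_coe_iff.mpr (inv_anti₀ ha' h)

lemma gapDist_nonneg {β : Fin n → ℝ} {C : Set (Fin n → ℝ)} (e : GapEnum β C) (m : ℕ) :
    0 ≤ gapDist β C e m :=
  Real.sInf_nonneg fun _ hx => hx.1.le

lemma exists_gapEnum_fill {β : Fin n → ℝ} (hβ : ∀ j, β j ∈ Set.Ioo (0:ℝ) 1)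
    {C K : Set (Fin n → ℝ)} (hC : IsCompact C) (hsub : C ⊆ closedBall 0 1)
    (hne : C.Nonempty) (e : GapEnum β C) :
    ∃ e' : GapEnum β (fill C K), thicknessA β C e ≤ thicknessA β (fill C K) e' := by
  classical
  set P : ℕ → Prop := fun k => k ∈ e.J ∧ (closure (e.G k) ∩ K).Nonempty with hPdef
  set J' : Set ℕ := {m | ∀ hf : (setOf P).Finite, m < hf.toFinset.card} with hJ'def
  have hJ'mono : ∀ k l : ℕ, k ≤ l → l ∈ J' → k ∈ J' :=
    fun k l hkl hl hf => lt_of_le_of_lt hkl (hl hf)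
  have hmemP : ∀ m ∈ J', P (Nat.nth P m) := fun m hm => Nat.nth_mem m hm
  have hgap' : ∀ m ∈ J', IsBoundedGap (fill C K) (e.G (Nat.nth P m)) := by
    intro m hm
    obtain ⟨hJm, hne'⟩ := hmemP m hm
    exact (isBoundedGap_fill_iff hC).mpr ⟨e.isGap _ hJm, hne'⟩
  have hinj : ∀ k ∈ J', ∀ l ∈ J', e.G (Nat.nth P k) = e.G (Nat.nth P l) → k = l := by
    intro k hk l hl heq
    have h1 := e.inj _ (hmemP k hk).1 _ (hmemP l hl).1 heq
    by_contra hne2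
    rcases Nat.lt_or_ge k l with h | h
    · exact absurd h1 (Nat.nth_lt_nth' h hl).ne
    · exact absurd h1.symm
        (Nat.nth_lt_nth' (lt_of_le_of_ne h fun hh => hne2 hh.symm) hk).ne
  have hsurj : ∀ G', IsBoundedGap (fill C K) G' → ∃ k ∈ J', e.G (Nat.nth P k) = G' := by
    intro G' hG'
    obtain ⟨hG2, hne2⟩ := (isBoundedGap_fill_iff hC).mp hG'
    obtain ⟨k, hk, hGk⟩ := e.surj G' hG2
    have hPk : P k := ⟨hk, by rw [hGk]; exact hne2⟩
    refine ⟨Nat.count P k, fun hf => Nat.count_lt_card hf hPk, ?_⟩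
    rw [Nat.nth_count hPk]; exact hGk
  have hanti : ∀ k ∈ J', ∀ l ∈ J', k ≤ l →
      sizeWrt β (e.G (Nat.nth P l)) ≤ sizeWrt β (e.G (Nat.nth P k)) := by
    intro k hk l hl hkl
    exact e.anti _ (hmemP k hk).1 _ (hmemP l hl).1 (Nat.nth_le_nth' hkl hl)
  refine ⟨⟨J', fun m => e.G (Nat.nth P m), hJ'mono, hgap', hinj, hsurj, hanti⟩, ?_⟩
  set e' : GapEnum β (fill C K) := ⟨J', fun m => e.G (Nat.nth P m), hJ'mono, hgap', hinj, hsurj, hanti⟩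
    with he'
  -- gap distance comparison
  have hGD : ∀ m ∈ J', gapDist β C e (Nat.nth P m) ≤ gapDist β (fill C K) e' m := by
    intro m hm
    have hσ : ∀ i, i < m → Nat.nth P i < Nat.nth P m := fun i hi => Nat.nth_lt_nth' hi hm
    apply csInf_le_csInf
    · exact ⟨0, fun t ht => ht.1.le⟩
    · -- nonemptiness of the set for `fill`
      have hGgap : IsBoundedGap C (e.G (Nat.nth P m)) := e.isGap _ (hmemP m hm).1
      obtain ⟨g, hg⟩ := gap_nonempty hGgap.1
      have hgball : g ∈ closedBall 0 1 := boundedGap_subset_ball hsub hGgap hg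
      have hfin : Nonempty (Fin n) := by
        by_contra hemp
        obtain ⟨c, hc⟩ := hne
        have hgc : g = c := funext fun j => absurd ⟨j⟩ hemp
        exact (gap_subset_compl hGgap.1 hg) (hgc ▸ hc)
      obtain ⟨j₀⟩ := hfin
      have hs : ∃ s : ℝ, (∀ j, (11/20 : ℝ) ≤ β j ^ s) ∧ 0 < s := by
        have hev : ∀ᶠ s in 𝓝 (0:ℝ), ∀ j, (11/20:ℝ) ≤ β j ^ s := by
          rw [eventually_all]
          intro j
          have hcont : ContinuousAt (fun s : ℝ => β j ^ s) 0 :=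
            Real.continuousAt_const_rpow (hβ j).1.ne'
          have ht : Filter.Tendsto (fun s : ℝ => β j ^ s) (𝓝 0) (𝓝 1) := by
            have h1 : (fun s : ℝ => β j ^ s) 0 = 1 := Real.rpow_zero _
            rw [← h1]; exact hcont
          exact ht.eventually (eventually_ge_nhds (by norm_num))
        have h2 := hev.filter_mono (nhdsWithin_le_nhds (s := Set.Ioi (0:ℝ)))
        exact (h2.and eventually_mem_nhdsWithin).exists
      obtain ⟨s, hs1, hs0⟩ := hs
      set d : ℝ := if 0 ≤ g j₀ then (11/10:ℝ) else -(11/10) with hd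
      have hdabs : |d| = 11/10 := by
        rw [hd]; split <;> simp [abs_of_nonneg, abs_of_nonpos] <;> norm_num
      set u : Fin n → ℝ := fun j => g j + (if j = j₀ then d else 0) with hu
      set z : Fin n → ℝ := fun j => g j + (if j = j₀ then d/2 else 0) with hz
      have huout : u ∉ closedBall 0 1 := by
        rw [mem_closedBall_zero_iff]
        intro hle
        have h1 : ‖u j₀‖ ≤ ‖u‖ := norm_le_pi_norm u j₀
        have h2 : |u j₀| ≤ 1 := by
          rw [← Real.norm_eq_abs]; exact h1.trans hle
        have hgj : |g j₀| ≤ 1 := by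
          rw [← Real.norm_eq_abs]
          exact (norm_le_pi_norm g j₀).trans (mem_closedBall_zero_iff.mp hgball)
        have h2' : |g j₀ + d| ≤ 1 := by
          have : u j₀ = g j₀ + d := by simp [hu]
          rwa [this] at h2
        rcases le_or_gt 0 (g j₀) with hsign | hsign
        · rw [hd, if_pos hsign, abs_le] at h2'; linarith
        · rw [hd, if_neg (not_le.mpr hsign), abs_le] at h2'; linarith
      have hzg : ∀ j, |g j - z j| ≤ β j ^ s := by
        intro j
        rw [hz]
        by_cases hj : j = j₀
        · have : g j - (g j + (if j = j₀ then d/2 else 0)) = -(d/2) := by rw [if_pos hj]; ring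
          rw [this, abs_neg, abs_div]
          rw [hdabs]
          calc (11/10 : ℝ) / |2| = 11/20 := by norm_num
          _ ≤ β j ^ s := hs1 j
        · have : g j - (g j + (if j = j₀ then d/2 else 0)) = 0 := by rw [if_neg hj]; ring
          rw [this, abs_zero]
          exact (Real.rpow_pos_of_pos (hβ j).1 s).le
      have hzu : ∀ j, |u j - z j| ≤ β j ^ s := by
        intro j
        rw [hz, hu]
        by_cases hj : j = j₀
        · have : g j + (if j = j₀ then d else 0) - (g j + (if j = j₀ then d/2 else 0)) = d/2 := by
            rw [if_pos hj, if_pos hj]; ring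
          rw [this, abs_div, hdabs]
          calc (11/10 : ℝ) / |2| = 11/20 := by norm_num
          _ ≤ β j ^ s := hs1 j
        · have : g j + (if j = j₀ then d else 0) - (g j + (if j = j₀ then d/2 else 0)) = 0 := by
            rw [if_neg hj, if_neg hj]; ring
          rw [this, abs_zero]
          exact (Real.rpow_pos_of_pos (hβ j).1 s).le
      refine ⟨s⁻¹, inv_pos.mpr hs0, z, ⟨g, ?_, hg⟩, ⟨u, ?_, Or.inr ?_⟩⟩
      · intro j; rw [one_div, inv_inv]; exact hzg j
      · intro j; rw [one_div, inv_inv]; exact hzu j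
      · rw [unboundedGap_fill hC]
        exact unbounded_component_outside hsub huout
    · -- subset
      rintro t ⟨ht, w, h1, h2⟩
      refine ⟨ht, w, h1, ?_⟩
      obtain ⟨v, hv1, hv2⟩ := h2
      refine ⟨v, hv1, ?_⟩
      rcases hv2 with hv | hv
      · left
        simp only [mem_iUnion, exists_prop, mem_inter_iff, mem_Iio] at hv ⊢
        obtain ⟨i, ⟨hiJ', hilt⟩, hvi⟩ := hv
        exact ⟨Nat.nth P i, ⟨(hmemP i hiJ').1, hσ i hilt⟩, hvi⟩
      · right; rwa [unboundedGap_fill hC] at hv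
  -- now the thickness comparison
  by_cases hJ : e.J = ∅
  · have hJ'e : J' = ∅ := by
      ext m
      simp only [hJ'def, mem_setOf_eq, mem_empty_iff_false, iff_false, not_forall]
      have hPempty : setOf P = ∅ := by
        ext k
        simp only [mem_setOf_eq, mem_empty_iff_false, iff_false, hPdef]
        rintro ⟨hk, -⟩; rw [hJ] at hk; exact hk
      have hf : (setOf P).Finite := by rw [hPempty]; exact finite_empty
      refine ⟨hf, ?_⟩
      simp [hPempty]
    by_cases hint : (interior C).Nonempty
    · have hint' : (interior (fill C K)).Nonempty := hint.mono (interior_mono subset_fill)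
      have h1 : thicknessA β C e = ⊤ := by simp [thicknessA, hJ, hint]
      have h2 : thicknessA β (fill C K) e' = ⊤ := by simp [thicknessA, he', hJ'e, hint']
      rw [h1, h2]
    · have h1 : thicknessA β C e = ⊥ := by simp [thicknessA, hJ, hint]
      rw [h1]; exact bot_le
  · by_cases hzero : ∃ k ∈ e.J, gapDist β C e k = 0
    · have h1 : thicknessA β C e = ⊥ := by simp only [thicknessA, if_neg hJ, if_pos hzero]
      rw [h1]; exact bot_le
    · by_cases hJ'e : J' = ∅
      · obtain ⟨k, hk⟩ := nonempty_iff_ne_empty.mpr hJ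
        have hnP : ¬ P k := by
          intro hPk
          have h0 : (0:ℕ) ∈ J' := by
            intro hf
            exact Finset.card_pos.mpr ⟨k, hf.mem_toFinset.mpr hPk⟩
          rw [hJ'e] at h0; exact h0
        have hsel : closure (e.G k) ∩ K = ∅ := by
          by_contra h
          exact hnP ⟨hk, nonempty_iff_ne_empty.mpr h⟩
        have hGsub : e.G k ⊆ fill C K := fun x hx =>
          Or.inr (mem_biUnion (⟨e.isGap k hk, hsel⟩ : _ ∈ {G | IsBoundedGap C G ∧ closure G ∩ K = ∅}) (subset_closure hx))
        have hint' : (interior (fill C K)).Nonempty := by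
          obtain ⟨g, hg⟩ := gap_nonempty (e.isGap k hk).1
          exact ⟨g, interior_maximal hGsub (gap_isOpen hC (e.isGap k hk).1) hg⟩
        have h2 : thicknessA β (fill C K) e' = ⊤ := by simp [thicknessA, he', hJ'e, hint']
        rw [h2]; exact le_top
      · have hGDpos : ∀ m ∈ J', 0 < gapDist β C e (Nat.nth P m) := by
          intro m hm
          rcases (gapDist_nonneg e (Nat.nth P m)).eq_or_lt with h | h
          · exfalso; exact hzero ⟨Nat.nth P m, (hmemP m hm).1, h.symm⟩
          · exact h
        have hzero' : ¬ ∃ m ∈ e'.J, gapDist β (fill C K) e' m = 0 := by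
          rintro ⟨m, hm, h0⟩
          exact absurd h0 (ne_of_gt (lt_of_lt_of_le (hGDpos m hm) (hGD m hm)))
        have hJ'e2 : e'.J ≠ ∅ := hJ'e
        rw [thicknessA, thicknessA, if_neg hJ, if_neg hzero, if_neg hJ'e2, if_neg hzero']
        refine le_iInf₂ fun m hm => ?_
        refine le_trans (iInf₂_le (Nat.nth P m) (hmemP m hm).1) ?_
        exact EReal.sub_le_sub le_rfl (invE_anti (hGDpos m hm).le (hGD m hm))
end RemoveGapsAux
end

/-- removing gaps contained in gaps of the other set. -/
theorem remove_contained_gaps (n : ℕ)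
    (β : Fin n → ℝ) (hβ : ∀ j, β j ∈ Set.Ioo (0 : ℝ) 1)
    (C₁ C₂ : Set (Fin n → ℝ)) (hC₁ : IsCompact C₁) (hC₂ : IsCompact C₂)
    (hne₁ : C₁.Nonempty) (hne₂ : C₂.Nonempty)
    (hsub₁ : C₁ ⊆ closedBall 0 1) (hsub₂ : C₂ ⊆ closedBall 0 1)
    (e₁ : GapEnum β C₁) (e₂ : GapEnum β C₂) :
    ∃ C₁' C₂' : Set (Fin n → ℝ), IsCompact C₁' ∧ IsCompact C₂' ∧
      C₁' ⊆ closedBall 0 1 ∧ C₂' ⊆ closedBall 0 1 ∧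
      C₁ ∩ C₂ = C₁' ∩ C₂' ∧
      (∃ e₁' : GapEnum β C₁', ∃ e₂' : GapEnum β C₂',
        thicknessA β C₁ e₁ + thicknessA β C₂ e₂ ≤
          thicknessA β C₁' e₁' + thicknessA β C₂' e₂') ∧
      (∀ G₁ G₂, IsBoundedGap C₁' G₁ → IsBoundedGap C₂' G₂ → ¬ closure G₁ ⊆ G₂) ∧
      (∀ G₁ G₂, IsBoundedGap C₁' G₁ → IsBoundedGap C₂' G₂ → ¬ closure G₂ ⊆ G₁) := by
  classical
  refine ⟨RemoveGapsAux.fill C₁ C₂, RemoveGapsAux.fill C₂ C₁,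
    RemoveGapsAux.isCompact_fill hC₁ hsub₁, RemoveGapsAux.isCompact_fill hC₂ hsub₂,
    RemoveGapsAux.fill_subset_ball hsub₁, RemoveGapsAux.fill_subset_ball hsub₂,
    ?_, ?_, ?_, ?_⟩
  · exact (RemoveGapsAux.fill_inter hC₁ hC₂ hne₁).symm
  · obtain ⟨e₁', h1⟩ := RemoveGapsAux.exists_gapEnum_fill (K := C₂) hβ hC₁ hsub₁ hne₁ e₁
    obtain ⟨e₂', h2⟩ := RemoveGapsAux.exists_gapEnum_fill (K := C₁) hβ hC₂ hsub₂ hne₂ e₂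
    exact ⟨e₁', e₂', add_le_add h1 h2⟩
  · intro G₁ G₂ hG₁ hG₂ hsubcl
    obtain ⟨hG₁C, hG₁ne⟩ := (RemoveGapsAux.isBoundedGap_fill_iff hC₁).mp hG₁
    have hG₂C := ((RemoveGapsAux.isBoundedGap_fill_iff hC₂).mp hG₂).1
    obtain ⟨y, hy1, hy2⟩ := hG₁ne
    exact (RemoveGapsAux.gap_subset_compl hG₂C.1 (hsubcl hy1)) hy2
  · intro G₁ G₂ hG₁ hG₂ hsubcl
    obtain ⟨hG₂C, hG₂ne⟩ := (RemoveGapsAux.isBoundedGap_fill_iff hC₂).mp hG₂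
    have hG₁C := ((RemoveGapsAux.isBoundedGap_fill_iff hC₁).mp hG₁).1
    obtain ⟨y, hy1, hy2⟩ := hG₂ne
    exact (RemoveGapsAux.gap_subset_compl hG₁C.1 (hsubcl hy1)) hy2
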